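/- Assume W*V = I_S. Let f : ℂ^N → ℂ^N and f_s : ℂ^S → ℂ^S be twice continuously differentiable (over ℝ) and globally Lipschitz. Let y : ℝ → ℂ^N satisfy y'(t) = f(y(t)) for all t with y(0) = y₀. Suppose that for each H > 0 there is a function z_H : [0,H] → ℂ^S with z_H(0) = W* y₀ and z_H'(θ) = f_s(z_H(θ)) + W* f(y₀) − f_s(W* y₀) for all θ ∈ [0,H], and define the SM-MRI-GARK Euler step Φ(H) := V z_H(H) + (I_N − V W*)( y₀ + H f(y₀) ). Then the local truncation error has leading term y(H) − Φ(H) = ½ H² ( Df(y₀)(f(y₀)) − V · Df_s(W* y₀)(W* f(y₀)) ) + O(H³) as H → 0⁺, where Df and Df_s denote the Fréchet derivatives of f and f_s; i.e., the local truncation error of SM-MRI-GARK Euler is ½ ( f'(y_n) − V f_s'(W* y_n) W* ) f(y_n) H² + O(H³). -/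

import Mathlib

open Set Filter Topology

variable {E : Type*} [NormedAddCommGroup E] [NormedSpace ℝ E]

/-- Second-order Taylor expansion with `O(H³)` remainder for solutions of an
autonomous ODE `u' = F(u)` with `C²` right-hand side, on `[0,1]`. -/
lemma ode_taylor2 (F : E → E) (hF : ContDiff ℝ 2 F) (u : ℝ → E)
    (hu : ∀ t ∈ Icc (0:ℝ) 1, HasDerivAt u (F (u t)) t) :
    ∃ M : ℝ, ∀ H ∈ Icc (0:ℝ) 1,
      ‖u H - u 0 - H • F (u 0) - (H ^ 2 / 2) • fderiv ℝ F (u 0) (F (u 0))‖ ≤ M * H ^ 3 := by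
  have hFd : Differentiable ℝ F := hF.differentiable (by norm_num)
  have hG : ContDiff ℝ 1 (fderiv ℝ F) := hF.fderiv_right (le_refl 2)
  set u1 : ℝ → E := fun t => F (u t) with hu1def
  set u2 : ℝ → E := fun t => fderiv ℝ F (u t) (u1 t) with hu2def
  set u3 : ℝ → E := fun t =>
    (fderiv ℝ (fderiv ℝ F) (u t) (u1 t)) (u1 t) + fderiv ℝ F (u t) (u2 t) with hu3def
  have hu1 : ∀ t ∈ Icc (0:ℝ) 1, HasDerivAt u1 (u2 t) t := fun t ht =>
    (hFd (u t)).hasFDerivAt.comp_hasDerivAt t (hu t ht)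
  have hu2 : ∀ t ∈ Icc (0:ℝ) 1, HasDerivAt u2 (u3 t) t := by
    intro t ht
    have hg : HasDerivAt (fun s => fderiv ℝ F (u s))
        (fderiv ℝ (fderiv ℝ F) (u t) (u1 t)) t :=
      ((hG.differentiable (by norm_num)) (u t)).hasFDerivAt.comp_hasDerivAt t (hu t ht)
    exact hg.clm_apply (hu1 t ht)
  have hucont : ContinuousOn u (Icc 0 1) := fun t ht => (hu t ht).continuousAt.continuousWithinAt
  have hu1cont : ContinuousOn u1 (Icc 0 1) := hF.continuous.comp_continuousOn hucont
  have hu2cont : ContinuousOn u2 (Icc 0 1) :=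
    ((hG.continuous.comp_continuousOn hucont).clm_apply hu1cont)
  have hu3cont : ContinuousOn u3 (Icc 0 1) := by
    apply ContinuousOn.add
    · exact (((hG.continuous_fderiv (by norm_num)).comp_continuousOn hucont).clm_apply hu1cont).clm_apply
        hu1cont
    · exact (hG.continuous.comp_continuousOn hucont).clm_apply hu2cont
  obtain ⟨M, hM⟩ := isCompact_Icc.exists_bound_of_continuousOn hu3cont
  have hM0 : 0 ≤ M := le_trans (norm_nonneg _) (hM 0 ⟨le_refl 0, zero_le_one⟩)
  refine ⟨M, fun H hH => ?_⟩
  have hsub : Icc (0:ℝ) H ⊆ Icc 0 1 := Icc_subset_Icc le_rfl hH.2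
  -- Step 1
  have step1 : ∀ t ∈ Icc (0:ℝ) H, ‖u2 t - u2 0‖ ≤ M * H := by
    intro t ht
    have := norm_image_sub_le_of_norm_deriv_le_segment'
      (f := u2) (f' := u3) (C := M) (a := 0) (b := H)
      (fun x hx => (hu2 x (hsub hx)).hasDerivWithinAt)
      (fun x hx => hM x (hsub (Ico_subset_Icc_self hx))) t ht
    calc ‖u2 t - u2 0‖ ≤ M * (t - 0) := this
      _ ≤ M * H := by nlinarith [ht.2, ht.1]
  -- Step 2
  set r1 : ℝ → E := fun t => u1 t - u1 0 - t • u2 0 with hr1def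
  have step2 : ∀ t ∈ Icc (0:ℝ) H, ‖r1 t‖ ≤ M * H * H := by
    intro t ht
    have hd : ∀ x ∈ Icc (0:ℝ) H, HasDerivWithinAt r1 (u2 x - u2 0) (Icc 0 H) x := by
      intro x hx
      have h1 : HasDerivAt (fun s : ℝ => u1 s - u1 0) (u2 x) x :=
        (hu1 x (hsub hx)).sub_const _
      have h2 : HasDerivAt (fun s : ℝ => s • u2 0) (u2 0) x := by
        simpa using (hasDerivAt_id x).smul_const (u2 0)
      exact ((h1.sub h2)).hasDerivWithinAt
    have := norm_image_sub_le_of_norm_deriv_le_segment' hd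
      (fun x hx => step1 x (Ico_subset_Icc_self hx)) t ht
    have hr10 : r1 0 = 0 := by simp [hr1def]
    rw [hr10, sub_zero] at this
    calc ‖r1 t‖ ≤ M * H * (t - 0) := this
      _ ≤ M * H * H := by nlinarith [ht.2, ht.1, mul_nonneg hM0 hH.1]
  -- Step 3
  set r : ℝ → E := fun t => u t - u 0 - t • u1 0 - (t ^ 2 / 2) • u2 0 with hrdef
  have hd : ∀ x ∈ Icc (0:ℝ) H, HasDerivWithinAt r (r1 x) (Icc 0 H) x := by
    intro x hx
    have h1 : HasDerivAt (fun s : ℝ => u s - u 0) (u1 x) x := (hu x (hsub hx)).sub_const _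
    have h2 : HasDerivAt (fun s : ℝ => s • u1 0) (u1 0) x := by
      simpa using (hasDerivAt_id x).smul_const (u1 0)
    have h3 : HasDerivAt (fun s : ℝ => (s ^ 2 / 2) • u2 0) (x • u2 0) x := by
      have : HasDerivAt (fun s : ℝ => s ^ 2 / 2) x x := by
        simpa using (hasDerivAt_pow 2 x).div_const 2
      simpa using this.smul_const (u2 0)
    exact ((h1.sub h2).sub h3).hasDerivWithinAt
  have := norm_image_sub_le_of_norm_deriv_le_segment' hd
    (fun x hx => step2 x (Ico_subset_Icc_self hx)) H (right_mem_Icc.2 hH.1)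
  have hr0 : r 0 = 0 := by simp [hrdef]
  rw [hr0, sub_zero] at this
  calc ‖u H - u 0 - H • u1 0 - (H ^ 2 / 2) • u2 0‖ = ‖r H‖ := by rfl
    _ ≤ M * H * H * (H - 0) := this
    _ = M * H ^ 3 := by ring

open Matrix Asymptotics Filter Topology

/-- With `W* V = I_S`, `f` and `f_s` twice continuously differentiable
and globally Lipschitz, and `y` the exact solution of `y' = f(y)`, `y(0) = y₀`, the
SM-MRI-GARK Euler step `Φ(H) = V z_H(H) + (I − V W*) (y₀ + H f(y₀))` has local
truncation error with leading term
`y(H) − Φ(H) = ½ H² (Df(y₀)(f(y₀)) − V Df_s(W* y₀)(W* f(y₀))) + O(H³)` as `H → 0⁺`. -/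
theorem sm_mri_gark_euler_leading_error (N S : ℕ) (hN : 0 < N) (hS : 0 < S)
    (V W : Matrix (Fin N) (Fin S) ℂ) (hVW : Wᴴ * V = 1)
    (f : (Fin N → ℂ) → (Fin N → ℂ)) (fs : (Fin S → ℂ) → (Fin S → ℂ))
    (hf : ContDiff ℝ 2 f) (hfs : ContDiff ℝ 2 fs)
    (Lf Lfs : NNReal) (hfL : LipschitzWith Lf f) (hfsL : LipschitzWith Lfs fs)
    (y₀ : Fin N → ℂ)
    (y : ℝ → (Fin N → ℂ)) (hy0 : y 0 = y₀)
    (hy : ∀ t : ℝ, HasDerivAt y (f (y t)) t)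
    (z : ℝ → ℝ → (Fin S → ℂ))
    (hz0 : ∀ H : ℝ, 0 < H → z H 0 = Wᴴ.mulVec y₀)
    (hz : ∀ H : ℝ, 0 < H → ∀ θ ∈ Set.Icc (0:ℝ) H,
      HasDerivAt (z H)
        (fs (z H θ) + (Wᴴ.mulVec (f y₀) - fs (Wᴴ.mulVec y₀))) θ) :
    (fun H : ℝ =>
        y H -
          (V.mulVec (z H H) +
            ((y₀ + H • f y₀) - (V * Wᴴ).mulVec (y₀ + H • f y₀))) -
          (H ^ 2 / 2) •
            (fderiv ℝ f y₀ (f y₀) -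
              V.mulVec (fderiv ℝ fs (Wᴴ.mulVec y₀) (Wᴴ.mulVec (f y₀)))))
      =O[𝓝[>] (0:ℝ)] fun H : ℝ => H ^ 3 := by
  set c : Fin S → ℂ := Wᴴ.mulVec (f y₀) - fs (Wᴴ.mulVec y₀) with hc
  set Fz : (Fin S → ℂ) → (Fin S → ℂ) := fun x => fs x + c with hFz
  have hFzc : ContDiff ℝ 2 Fz := hfs.add contDiff_const
  -- Taylor expansion for y
  obtain ⟨M1, hM1⟩ := ode_taylor2 f hf y (fun t _ => hy t)
  -- Taylor expansion for z 1
  obtain ⟨M2, hM2⟩ := ode_taylor2 Fz hFzc (z 1) (hz 1 one_pos)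
  -- notation
  set A : Fin N → ℂ := fderiv ℝ f y₀ (f y₀) with hA
  set B : Fin S → ℂ := fderiv ℝ fs (Wᴴ.mulVec y₀) (Wᴴ.mulVec (f y₀)) with hB
  have hz10 : z 1 0 = Wᴴ.mulVec y₀ := hz0 1 one_pos
  have hFz0 : Fz (Wᴴ.mulVec y₀) = Wᴴ.mulVec (f y₀) := by
    simp [hFz, hc]
  have hfderivFz : fderiv ℝ Fz (Wᴴ.mulVec y₀) (Wᴴ.mulVec (f y₀)) = B := by
    rw [hB, hFz, fderiv_add_const]
  -- rewrite hM2
  rw [hz10, hFz0, hfderivFz] at hM2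
  rw [hy0] at hM1
  -- uniqueness of the z-solution
  have huniq : ∀ H ∈ Set.Ioc (0:ℝ) 1, z H H = z 1 H := by
    intro H hH
    have hLip : ∀ t : ℝ, LipschitzWith Lfs Fz := by
      intro t x x'
      simpa [hFz, edist_add_right] using hfsL x x'
    have hce : ∀ (H' : ℝ) (hH' : 0 < H') (θ : ℝ), θ ∈ Set.Icc (0:ℝ) H' →
        HasDerivAt (z H') (Fz (z H' θ)) θ := fun H' hH' θ hθ => hz H' hH' θ hθ
    have := ODE_solution_unique (v := fun _ x => Fz x) (K := Lfs) (f := z H) (g := z 1)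
      (a := 0) (b := H) (fun _ => hLip 0)
      (fun t ht => (hce H hH.1 t ht).continuousAt.continuousWithinAt)
      (fun t ht => (hce H hH.1 t (Set.Ico_subset_Icc_self ht)).hasDerivWithinAt)
      (fun t ht => (hce 1 one_pos t ⟨ht.1, le_trans ht.2 hH.2⟩).continuousAt.continuousWithinAt)
      (fun t ht => (hce 1 one_pos t ⟨ht.1, le_trans (le_of_lt ht.2) hH.2⟩).hasDerivWithinAt)
      (by rw [hz0 H hH.1, hz10])
    exact this (Set.right_mem_Icc.2 (le_of_lt hH.1))
  -- the continuous linear map given by V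
  set L : (Fin S → ℂ) →L[ℝ] (Fin N → ℂ) :=
    LinearMap.toContinuousLinearMap ((Matrix.mulVecLin V).restrictScalars ℝ) with hL
  have hLx : ∀ x, L x = V.mulVec x := by
    intro x
    rw [hL]
    rw [show ⇑(LinearMap.toContinuousLinearMap ((Matrix.mulVecLin V).restrictScalars ℝ))
        = ⇑((Matrix.mulVecLin V).restrictScalars ℝ) from
      LinearMap.coe_toContinuousLinearMap' _]
    simp
  -- smul compatibility
  have hmulVec_smul : ∀ (A' : Matrix (Fin N) (Fin S) ℂ) (H : ℝ) (x : Fin S → ℂ),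
      A'.mulVec (H • x) = H • A'.mulVec x := by
    intro A' H x
    rw [← algebraMap_smul ℂ H x, Matrix.mulVec_smul, algebraMap_smul]
  have hWsmul : ∀ (H : ℝ), Wᴴ.mulVec (y₀ + H • f y₀)
      = Wᴴ.mulVec y₀ + H • Wᴴ.mulVec (f y₀) := by
    intro H
    rw [Matrix.mulVec_add]
    congr 1
    rw [← algebraMap_smul ℂ H (f y₀), Matrix.mulVec_smul, algebraMap_smul]
  rw [isBigO_iff]
  refine ⟨M1 + ‖L‖ * M2, ?_⟩
  filter_upwards [Ioc_mem_nhdsGT one_pos] with H hH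
  have hHIcc : H ∈ Set.Icc (0:ℝ) 1 := ⟨le_of_lt hH.1, hH.2⟩
  have key : y H -
          (V.mulVec (z H H) +
            ((y₀ + H • f y₀) - (V * Wᴴ).mulVec (y₀ + H • f y₀))) -
          (H ^ 2 / 2) • (A - V.mulVec B)
      = (y H - y₀ - H • f y₀ - (H ^ 2 / 2) • A)
        - L (z 1 H - Wᴴ.mulVec y₀ - H • Wᴴ.mulVec (f y₀) - (H ^ 2 / 2) • B) := by
    rw [huniq H hH, ← Matrix.mulVec_mulVec, hWsmul H]
    simp only [← hLx, map_sub, map_add, _root_.map_smul, smul_sub]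
    abel
  rw [key]
  have h1 := hM1 H hHIcc
  have h2 := hM2 H hHIcc
  have hLb : ‖L (z 1 H - Wᴴ.mulVec y₀ - H • Wᴴ.mulVec (f y₀) - (H ^ 2 / 2) • B)‖
      ≤ ‖L‖ * (M2 * H ^ 3) :=
    le_trans (L.le_opNorm _) (by
      exact mul_le_mul_of_nonneg_left h2 (norm_nonneg L))
  have hH3 : ‖H ^ 3‖ = H ^ 3 := by
    rw [Real.norm_eq_abs, abs_of_nonneg (pow_nonneg (le_of_lt hH.1) 3)]
  calc ‖_ - _‖ ≤ M1 * H ^ 3 + ‖L‖ * (M2 * H ^ 3) := le_trans (norm_sub_le _ _) (add_le_add h1 hLb)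
    _ = (M1 + ‖L‖ * M2) * ‖H ^ 3‖ := by rw [hH3]; ring
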